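/- Let K be a CRG all of whose vertices are white and all of whose edges are black or gray. Suppose v and v' are vertices of K joined by a gray edge such that at least three vertices of K are joined to both v and v' by gray edges. Then H9 embeds in K. -/
import Mathlib


/-- Colors for edges of a colored regularity graph. -/
inductive EColor : Type
  | white
  | gray
  | black
deriving DecidableEq

/-- A colored regularity graph (CRG) on a finite vertex type `V`: each vertex is
white or black (`vWhite v = true` means white), and each pair of distinct vertices
gets a symmetric edge color (white, gray or black). -/
structure CRG (V : Type) [Fintype V] where
  vWhite : V → Bool
  ecolor : V → V → EColor
  ecolor_symm : ∀ u v, ecolor u v = ecolor v u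

namespace CRG

variable {V : Type} [Fintype V] [DecidableEq V]

/-- The matrix `M_K(p)`. -/
noncomputable def M (K : CRG V) (p : ℝ) (u v : V) : ℝ :=
  if u = v then (if K.vWhite u then p else 1 - p)
  else
    match K.ecolor u v with
    | EColor.white => p
    | EColor.black => 1 - p
    | EColor.gray => 0

/-- The function `g_K(p)`: the minimum of `xᵀ M_K(p) x` over nonnegative weight
vectors summing to `1`. -/
noncomputable def g (K : CRG V) (p : ℝ) : ℝ :=
  sInf {r : ℝ | ∃ x : V → ℝ, (∀ v, 0 ≤ x v) ∧ (∑ v, x v) = 1 ∧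
    r = ∑ u, ∑ v, x u * K.M p u v * x v}

/-- The sub-CRG induced on a subset `s` of the vertices. -/
def sub (K : CRG V) (s : Finset V) : CRG {v // v ∈ s} where
  vWhite := fun v => K.vWhite v.1
  ecolor := fun u v => K.ecolor u.1 v.1
  ecolor_symm := fun u v => K.ecolor_symm u.1 v.1

/-- `K` is `p`-core if `g_K(p) < g_{K'}(p)` for every proper (nonempty) sub-CRG `K'`. -/
def IsPCore (K : CRG V) (p : ℝ) : Prop :=
  ∀ s : Finset V, s.Nonempty → s ≠ Finset.univ → K.g p < (K.sub s).g p

/-- `x` is an optimal weight vector for `K` at `p`. -/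
def IsOptWeight (K : CRG V) (p : ℝ) (x : V → ℝ) : Prop :=
  (∀ v, 0 ≤ x v) ∧ (∑ v, x v) = 1 ∧
    (∑ u, ∑ v, x u * K.M p u v * x v) = K.g p

/-- The gray degree `d_G(v)`: total weight of gray neighbors of `v`. -/
noncomputable def dG (K : CRG V) (x : V → ℝ) (v : V) : ℝ :=
  ∑ w ∈ Finset.univ.filter fun w => w ≠ v ∧ K.ecolor v w = EColor.gray, x w

/-- The white degree `d_W(v)`: total weight of white neighbors of `v`, including `v`
itself if `v` is white. -/
noncomputable def dW (K : CRG V) (x : V → ℝ) (v : V) : ℝ :=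
  (∑ w ∈ Finset.univ.filter fun w => w ≠ v ∧ K.ecolor v w = EColor.white, x w) +
    (if K.vWhite v then x v else 0)

/-- The black degree `d_B(v)`: total weight of black neighbors of `v`, including `v`
itself if `v` is black. -/
noncomputable def dB (K : CRG V) (x : V → ℝ) (v : V) : ℝ :=
  (∑ w ∈ Finset.univ.filter fun w => w ≠ v ∧ K.ecolor v w = EColor.black, x w) +
    (if K.vWhite v then 0 else x v)

/-- The number of gray neighbors of `v`. -/
def grayDeg (K : CRG V) (v : V) : ℕ :=
  (Finset.univ.filter fun w => w ≠ v ∧ K.ecolor v w = EColor.gray).card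

end CRG

/-- A graph `H` embeds in a CRG `K`, written `H ↦ K`. -/
def EmbedsIn {α : Type*} {V : Type} [Fintype V] (H : SimpleGraph α) (K : CRG V) : Prop :=
  ∃ φ : α → V,
    (∀ a b : α, H.Adj a b →
      (φ a = φ b ∧ K.vWhite (φ a) = false) ∨
      (φ a ≠ φ b ∧ (K.ecolor (φ a) (φ b) = EColor.black ∨ K.ecolor (φ a) (φ b) = EColor.gray))) ∧
    (∀ a b : α, a ≠ b → ¬H.Adj a b →
      (φ a = φ b ∧ K.vWhite (φ a) = true) ∨
      (φ a ≠ φ b ∧ (K.ecolor (φ a) (φ b) = EColor.white ∨ K.ecolor (φ a) (φ b) = EColor.gray)))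

/-- The graph `H₉`: vertices `ℤ₉`, distinct `i,j` adjacent iff `i - j ≡ ±1, ±2 (mod 9)`
or `{i,j} ⊆ {0,3,6}`. -/
def H9 : SimpleGraph (ZMod 9) :=
  SimpleGraph.fromRel (fun i j =>
    i - j = 1 ∨ i - j = 2 ∨ (i ∈ ({0, 3, 6} : Set (ZMod 9)) ∧ j ∈ ({0, 3, 6} : Set (ZMod 9))))

/-- Auxiliary class map: 0↦w1, 3↦w2, 6↦w3, {1,4,7}↦v, {2,5,8}↦v'. -/
def cls9 : ZMod 9 → Fin 5 := ![0, 1, 2, 3, 1, 2, 4, 1, 2]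

/-- Unfolded adjacency relation of H9. -/
def H9rel (a b : ZMod 9) : Prop :=
  a ≠ b ∧ ((a - b = 1 ∨ a - b = 2 ∨ ((a = 0 ∨ a = 3 ∨ a = 6) ∧ (b = 0 ∨ b = 3 ∨ b = 6))) ∨
    (b - a = 1 ∨ b - a = 2 ∨ ((b = 0 ∨ b = 3 ∨ b = 6) ∧ (a = 0 ∨ a = 3 ∨ a = 6))))

instance (a b : ZMod 9) : Decidable (H9rel a b) := by
  unfold H9rel; infer_instance

/-- Lookup of the five image vertices by class. -/
def pick5 {V : Type} (w1 v v' w2 w3 : V) : Fin 5 → V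
  | ⟨0, _⟩ => w1
  | ⟨1, _⟩ => v
  | ⟨2, _⟩ => v'
  | ⟨3, _⟩ => w2
  | ⟨4, _⟩ => w3

lemma H9_adj_iff (a b : ZMod 9) : H9.Adj a b ↔ H9rel a b := by
  simp [H9, SimpleGraph.fromRel_adj, H9rel, Set.mem_insert_iff, Set.mem_singleton_iff]

lemma adj_cls : ∀ a b : ZMod 9, H9rel a b → cls9 a ≠ cls9 b := by decide

lemma nadj_cls : ∀ a b : ZMod 9, a ≠ b → ¬H9rel a b →
    cls9 a = cls9 b ∨ (cls9 a ≠ cls9 b ∧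
      (cls9 a = 1 ∨ cls9 a = 2 ∨ cls9 b = 1 ∨ cls9 b = 2)) := by decide

lemma pick5_inj {V : Type} {w1 v v' w2 w3 : V}
    (h1v : w1 ≠ v) (h1v' : w1 ≠ v') (h2v : w2 ≠ v) (h2v' : w2 ≠ v')
    (h3v : w3 ≠ v) (h3v' : w3 ≠ v') (h12 : w1 ≠ w2) (h13 : w1 ≠ w3)
    (h23 : w2 ≠ w3) (hne : v ≠ v') :
    Function.Injective (pick5 w1 v v' w2 w3) := by
  intro c d h
  fin_cases c <;> fin_cases d <;> simp_all [pick5, h1v, h1v', h2v, h2v', h3v, h3v',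
    h12, h13, h23, hne, (Ne.symm h1v), (Ne.symm h1v'), (Ne.symm h2v), (Ne.symm h2v'),
    (Ne.symm h3v), (Ne.symm h3v'), (Ne.symm h12), (Ne.symm h13), (Ne.symm h23),
    (Ne.symm hne)]

lemma pick5_gray {V : Type} [Fintype V] {K : CRG V} {w1 v v' w2 w3 : V}
    (hgray : K.ecolor v v' = EColor.gray) (hgray' : K.ecolor v' v = EColor.gray)
    (h1g : K.ecolor v w1 = EColor.gray) (h1g' : K.ecolor v' w1 = EColor.gray)
    (h2g : K.ecolor v w2 = EColor.gray) (h2g' : K.ecolor v' w2 = EColor.gray)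
    (h3g : K.ecolor v w3 = EColor.gray) (h3g' : K.ecolor v' w3 = EColor.gray)
    (h1gs : K.ecolor w1 v = EColor.gray) (h1gs' : K.ecolor w1 v' = EColor.gray)
    (h2gs : K.ecolor w2 v = EColor.gray) (h2gs' : K.ecolor w2 v' = EColor.gray)
    (h3gs : K.ecolor w3 v = EColor.gray) (h3gs' : K.ecolor w3 v' = EColor.gray) :
    ∀ c d : Fin 5, c ≠ d → (c = 1 ∨ c = 2 ∨ d = 1 ∨ d = 2) →
      K.ecolor (pick5 w1 v v' w2 w3 c) (pick5 w1 v v' w2 w3 d) = EColor.gray := by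
  intro c d hcd h
  fin_cases c <;> fin_cases d <;>
    simp_all [pick5, hgray, hgray', h1g, h1g', h2g, h2g', h3g, h3g',
      h1gs, h1gs', h2gs, h2gs', h3gs, h3gs']


theorem H9_embeds_of_three_common_gray {V : Type} [Fintype V] [DecidableEq V]
    (K : CRG V)
    (hwhite : ∀ v : V, K.vWhite v = true)
    (hedges : ∀ u v : V, u ≠ v → K.ecolor u v ≠ EColor.white)
    (v v' : V) (hne : v ≠ v') (hgray : K.ecolor v v' = EColor.gray)
    (hcommon : 3 ≤ (Finset.univ.filter fun w =>
      w ≠ v ∧ w ≠ v' ∧ K.ecolor v w = EColor.gray ∧ K.ecolor v' w = EColor.gray).card) :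
    EmbedsIn H9 K := by
  classical
  obtain ⟨w1, w2, w3, hw1, hw2, hw3, h12, h13, h23⟩ :=
    Finset.two_lt_card_iff.mp (by omega : 2 < (Finset.univ.filter fun w =>
      w ≠ v ∧ w ≠ v' ∧ K.ecolor v w = EColor.gray ∧ K.ecolor v' w = EColor.gray).card)
  simp only [Finset.mem_filter, Finset.mem_univ, true_and] at hw1 hw2 hw3
  obtain ⟨h1v, h1v', h1g, h1g'⟩ := hw1
  obtain ⟨h2v, h2v', h2g, h2g'⟩ := hw2
  obtain ⟨h3v, h3v', h3g, h3g'⟩ := hw3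
  have hbg : ∀ u w : V, u ≠ w →
      K.ecolor u w = EColor.black ∨ K.ecolor u w = EColor.gray := by
    intro u w huw
    cases h : K.ecolor u w with
    | white => exact absurd h (hedges u w huw)
    | gray => exact Or.inr rfl
    | black => exact Or.inl rfl
  have hsym : ∀ u w : V, K.ecolor u w = EColor.gray → K.ecolor w u = EColor.gray := by
    intro u w h; rw [K.ecolor_symm]; exact h
  set g : Fin 5 → V := pick5 w1 v v' w2 w3 with hg
  have ginj : Function.Injective g :=
    pick5_inj h1v h1v' h2v h2v' h3v h3v' h12 h13 h23 hne
  have grayL := pick5_gray hgray (hsym _ _ hgray) h1g h1g' h2g h2g' h3g h3g'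
    (hsym _ _ h1g) (hsym _ _ h1g') (hsym _ _ h2g) (hsym _ _ h2g')
    (hsym _ _ h3g) (hsym _ _ h3g')
  refine ⟨fun i => g (cls9 i), ?_, ?_⟩
  · intro a b hab
    have h1 : cls9 a ≠ cls9 b := adj_cls a b ((H9_adj_iff a b).mp hab)
    have h2 : g (cls9 a) ≠ g (cls9 b) := fun h => h1 (ginj h)
    exact Or.inr ⟨h2, hbg _ _ h2⟩
  · intro a b hab hnadj
    rcases nadj_cls a b hab (fun h => hnadj ((H9_adj_iff a b).mpr h)) with h | ⟨h1, h2⟩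
    · exact Or.inl ⟨congrArg g h, hwhite _⟩
    · have hne' : g (cls9 a) ≠ g (cls9 b) := fun h => h1 (ginj h)
      exact Or.inr ⟨hne', Or.inr (grayL _ _ h1 h2)⟩
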